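/- For the Gray map φ_L on Z_{p^s} extended coordinatewise to Z_{p^s}^n, and for any vectors v, w ∈ Z_{p^s}^n: φ_L(p^{s-1}·v + w) = φ_L(p^{s-1}·v) + φ_L(w). -/

import Mathlib

/-- The extended Lee weight on `ZMod (p^s)`. -/
def leeWt (p s : ℕ) (x : ZMod (p ^ s)) : ℕ :=
  if x.val ≤ p ^ s - p ^ (s - 1) then min x.val (p ^ (s - 1)) else p ^ s - x.val

/-- The Gray map `φ_L : ZMod (p^s) → (F_p)^(p^(s-1))`:
`x = q·p^(s-1) + r` maps to the vector with `q+1` in the first `r` coordinates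
and `q` in the rest. -/
def gray (p s : ℕ) (x : ZMod (p ^ s)) : Fin (p ^ (s - 1)) → ZMod p :=
  fun i =>
    if i.val < x.val % p ^ (s - 1) then ((x.val / p ^ (s - 1) + 1 : ℕ) : ZMod p)
    else ((x.val / p ^ (s - 1) : ℕ) : ZMod p)

/-- The Gray map extended coordinatewise to vectors. -/
def grayV (p s n : ℕ) (v : Fin n → ZMod (p ^ s)) : Fin n → Fin (p ^ (s - 1)) → ZMod p :=
  fun i => gray p s (v i)

lemma gray_add_torsion (p s : ℕ) (hp : p.Prime) (hs : 1 ≤ s) (a b : ZMod (p ^ s)) :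
    gray p s ((p : ZMod (p ^ s)) ^ (s - 1) * a + b) =
      gray p s ((p : ZMod (p ^ s)) ^ (s - 1) * a) + gray p s b := by
  haveI : NeZero (p ^ s) := ⟨pow_ne_zero _ hp.pos.ne'⟩
  have hm : 0 < p ^ (s - 1) := pow_pos hp.pos _
  have hN : p ^ s = p ^ (s - 1) * p := by rw [← pow_succ]; congr 1; omega
  have hmN : p ^ (s - 1) ∣ p ^ s := ⟨p, hN⟩
  set c : ZMod (p ^ s) := (p : ZMod (p ^ s)) ^ (s - 1) * a with hc_def
  have hcast : ((p ^ (s - 1) : ℕ) : ZMod (p ^ s)) = (p : ZMod (p ^ s)) ^ (s - 1) := by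
    push_cast; ring
  have hAdvd : p ^ (s - 1) ∣ c.val := by
    rw [hc_def, ← hcast, ZMod.val_mul, ZMod.val_natCast]
    exact (Nat.dvd_mod_iff hmN).mpr (Dvd.dvd.mul_right ((Nat.dvd_mod_iff hmN).mpr dvd_rfl) _)
  have hA0 : c.val % p ^ (s - 1) = 0 := by
    obtain ⟨k, hk⟩ := hAdvd; simp [hk, Nat.mul_mod_right]
  set A := c.val with hA_def
  set B := b.val with hB_def
  have hAB : (c + b).val = (A + B) % p ^ s := ZMod.val_add c b
  set R := (A + B) % p ^ s with hR_def
  set e := (A + B) / p ^ s with he_def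
  have hdiv : R + p ^ s * e = A + B := Nat.mod_add_div _ _
  have h1 : R % p ^ (s - 1) = B % p ^ (s - 1) := by
    rw [hR_def, Nat.mod_mod_of_dvd _ hmN, Nat.add_mod, hA0, Nat.zero_add, Nat.mod_mod]
  have hnat : R / p ^ (s - 1) + p * e = A / p ^ (s - 1) + B / p ^ (s - 1) := by
    apply Nat.eq_of_mul_eq_mul_left hm
    have e1 := Nat.div_add_mod R (p ^ (s - 1))
    have e2 := Nat.div_add_mod B (p ^ (s - 1))
    have e3 := Nat.div_add_mod A (p ^ (s - 1))
    have hdiv' : R + p ^ (s - 1) * (p * e) = A + B := by rw [← mul_assoc, ← hN]; exact hdiv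
    rw [Nat.mul_add, Nat.mul_add]
    linarith [e1, e2, e3, hdiv', h1, hA0]
  have hcastp : ((R / p ^ (s - 1) : ℕ) : ZMod p)
      = ((A / p ^ (s - 1) : ℕ) : ZMod p) + ((B / p ^ (s - 1) : ℕ) : ZMod p) := by
    have h := congrArg (fun k : ℕ => (k : ZMod p)) hnat
    push_cast at h
    simpa [ZMod.natCast_self] using h
  funext j
  simp only [gray, Pi.add_apply, hAB, ← hR_def, ← hA_def, ← hB_def, h1, hA0, Nat.not_lt_zero, if_false]
  split
  · push_cast [hcastp]; ring
  · push_cast [hcastp]; ring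

/-- `φ_L(p^(s-1)·v + w) = φ_L(p^(s-1)·v) + φ_L(w)` for all vectors `v, w`. -/
theorem grayV_add_torsion (p s n : ℕ) (hp : p.Prime) (hs : 1 ≤ s)
    (v w : Fin n → ZMod (p ^ s)) :
    grayV p s n ((p : ZMod (p ^ s)) ^ (s - 1) • v + w) =
      grayV p s n ((p : ZMod (p ^ s)) ^ (s - 1) • v) + grayV p s n w := by
  funext i
  have h := gray_add_torsion p s hp hs (v i) (w i)
  simpa [grayV, Pi.add_apply, Pi.smul_apply, smul_eq_mul] using h
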